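/- Let D be a DAG on V with initial nodes V₀ and χ the tail dependence matrix of a recursive max-weighted model on D. For i ∈ V set V₀ⁱ = {k ∈ V₀ : χ(k,i) > 0}. Then every permutation σ of V satisfying (i) σ(j) < σ(i) whenever |V₀ʲ| < |V₀ⁱ|, and (ii) σ(j) < σ(i) whenever |V₀ʲ| = |V₀ⁱ| and max_{k∈V₀ⁱ} χ(k,i) < max_{k∈V₀ʲ} χ(k,j), is a causal ordering of D (i.e., σ(j) < σ(i) for all i ∈ V and j ∈ an(i)). -/

import Mathlib

open Finset
open scoped Classical

/-- `anc E j i`: there is a directed path (length ≥ 1) from `j` to `i`, i.e. `j` is a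
strict ancestor of `i` in the directed graph with edge relation `E`. -/
def anc {d : ℕ} (E : Fin d → Fin d → Prop) (j i : Fin d) : Prop :=
  Relation.TransGen E j i

/-- `Anc E j i`: `j` is an ancestor of `i`, including `j = i`. -/
def Anc {d : ℕ} (E : Fin d → Fin d → Prop) (j i : Fin d) : Prop :=
  j = i ∨ Relation.TransGen E j i

/-- The tail dependence coefficient associated to a (standardized) max-linear
coefficient matrix `B`: `χ(i,j) = ∑_{k ∈ An(i) ∩ An(j)} min (B k i) (B k j)`. -/
noncomputable def tdc {d : ℕ} (E : Fin d → Fin d → Prop)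
    (B : Matrix (Fin d) (Fin d) ℝ) (i j : Fin d) : ℝ :=
  ∑ k ∈ Finset.univ.filter (fun k => Anc E k i ∧ Anc E k j), min (B k i) (B k j)

section helpers
variable {d : ℕ} {E : Fin d → Fin d → Prop}

lemma Anc_trans {a b c : Fin d} (h1 : Anc E a b) (h2 : Anc E b c) : Anc E a c := by
  rcases h1 with rfl | h1
  · exact h2
  · rcases h2 with rfl | h2
    · exact Or.inr h1
    · exact Or.inr (h1.trans h2)

lemma initial_anc_iff {k : Fin d} (hk : ∀ m, ¬ E m k) (m : Fin d) :
    Anc E m k ↔ m = k := by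
  constructor
  · rintro (rfl | h)
    · rfl
    · cases h with
      | single h => exact absurd h (hk _)
      | tail _ h => exact absurd h (hk _)
  · rintro rfl; exact Or.inl rfl

lemma not_Anc_of_anc (hacyc : ∀ i, ¬ anc E i i) {j i : Fin d} (h : anc E j i) :
    ¬ Anc E i j := by
  rintro (rfl | h')
  · exact hacyc _ h
  · exact hacyc i (h'.trans h)

lemma exists_initial_anc (hacyc : ∀ i, ¬ anc E i i) (i : Fin d) :
    ∃ k, (∀ m, ¬ E m k) ∧ Anc E k i := by
  obtain ⟨k, hk, hmin⟩ := Finset.exists_min_image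
    (Finset.univ.filter (fun k => Anc E k i))
    (fun k => (Finset.univ.filter (fun m => Anc E m k)).card)
    ⟨i, by exact Finset.mem_filter.2 ⟨Finset.mem_univ _, Or.inl rfl⟩⟩
  simp only [mem_filter, mem_univ, true_and] at hk
  refine ⟨k, fun m hm => ?_, hk⟩
  have hmk : anc E m k := Relation.TransGen.single hm
  have hmi : Anc E m i := Anc_trans (Or.inr hmk) hk
  have hss : (Finset.univ.filter (fun x => Anc E x m)) ⊂
      (Finset.univ.filter (fun x => Anc E x k)) := by
    constructor
    · intro x hx
      simp only [mem_filter, mem_univ, true_and] at hx ⊢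
      exact Anc_trans hx (Or.inr hmk)
    · intro hsub
      have : k ∈ Finset.univ.filter (fun x => Anc E x m) :=
        hsub (by exact Finset.mem_filter.2 ⟨Finset.mem_univ _, Or.inl rfl⟩)
      simp only [mem_filter, mem_univ, true_and] at this
      exact not_Anc_of_anc hacyc hmk this
  have := Finset.card_lt_card hss
  have := hmin m (by simp [hmi])
  omega

lemma Bkk_eq_one {B : Matrix (Fin d) (Fin d) ℝ}
    (hcol : ∀ i, ∑ k ∈ Finset.univ.filter (fun k => Anc E k i), B k i = 1)
    {k : Fin d} (hk : ∀ m, ¬ E m k) : B k k = 1 := by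
  have h := hcol k
  have : Finset.univ.filter (fun m => Anc E m k) = {k} := by
    ext m; simp [initial_anc_iff hk]
  rw [this, Finset.sum_singleton] at h
  exact h

lemma tdc_initial {B : Matrix (Fin d) (Fin d) ℝ} {k i : Fin d}
    (hk : ∀ m, ¬ E m k) :
    tdc E B k i = if Anc E k i then min (B k k) (B k i) else 0 := by
  unfold tdc
  have : Finset.univ.filter (fun m => Anc E m k ∧ Anc E m i) =
      if Anc E k i then {k} else ∅ := by
    split
    · next h =>
        ext m
        simp only [mem_filter, mem_univ, true_and, mem_singleton, initial_anc_iff hk]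
        constructor
        · rintro ⟨rfl, _⟩; rfl
        · rintro rfl; exact ⟨rfl, h⟩
    · next h =>
        ext m
        simp only [mem_filter, mem_univ, true_and, notMem_empty, iff_false,
          initial_anc_iff hk, not_and]
        rintro rfl
        exact h
  rw [this]
  split <;> simp

lemma mem_V0i {B : Matrix (Fin d) (Fin d) ℝ}
    (hsgn : ∀ j i, 0 < B j i ↔ Anc E j i)
    (k i : Fin d) :
    k ∈ Finset.univ.filter (fun k => (∀ m, ¬ E m k) ∧ 0 < tdc E B k i) ↔
      (∀ m, ¬ E m k) ∧ Anc E k i := by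
  simp only [mem_filter, mem_univ, true_and]
  constructor
  · rintro ⟨hk, hpos⟩
    refine ⟨hk, ?_⟩
    by_contra h
    rw [tdc_initial hk, if_neg h] at hpos
    exact lt_irrefl 0 hpos
  · rintro ⟨hk, hki⟩
    refine ⟨hk, ?_⟩
    rw [tdc_initial hk, if_pos hki]
    exact lt_min ((hsgn k k).2 (Or.inl rfl)) ((hsgn k i).2 hki)

lemma key_ratio {B : Matrix (Fin d) (Fin d) ℝ}
    (hacyc : ∀ i, ¬ anc E i i)
    (hnn : ∀ j i, 0 ≤ B j i)
    (hsgn : ∀ j i, 0 < B j i ↔ Anc E j i)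
    (hcol : ∀ i, ∑ k ∈ Finset.univ.filter (fun k => Anc E k i), B k i = 1)
    (hmw : ∀ i k j, anc E k i → anc E j k → B j i = B j k * B k i / B k k)
    {j i : Fin d} (hji : anc E j i) : B j i < B j j := by
  have hBjj : 0 < B j j := (hsgn j j).2 (Or.inl rfl)
  have hBii : 0 < B i i := (hsgn i i).2 (Or.inl rfl)
  set r := B j i / B j j with hr
  have hmul : ∀ m ∈ Finset.univ.filter (fun m => Anc E m j),
      B m i = B m j * r := by
    intro m hm
    simp only [mem_filter, mem_univ, true_and] at hm
    rcases hm with rfl | hm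
    · rw [hr]; field_simp
    · rw [hr, hmw i j m hji hm]; ring
  have hsum : ∑ m ∈ Finset.univ.filter (fun m => Anc E m j), B m i = r := by
    rw [Finset.sum_congr rfl hmul, ← Finset.sum_mul, hcol j, one_mul]
  have hinotin : i ∉ Finset.univ.filter (fun m => Anc E m j) := by
    simp only [mem_filter, mem_univ, true_and]
    exact not_Anc_of_anc hacyc hji
  have hsub : insert i (Finset.univ.filter (fun m => Anc E m j)) ⊆
      Finset.univ.filter (fun m => Anc E m i) := by
    intro x hx
    rcases Finset.mem_insert.mp hx with rfl | hx
    · exact Finset.mem_filter.2 ⟨Finset.mem_univ _, Or.inl rfl⟩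
    · simp only [mem_filter, mem_univ, true_and] at hx ⊢
      exact Anc_trans hx (Or.inr hji)
  have hle : ∑ m ∈ insert i (Finset.univ.filter (fun m => Anc E m j)), B m i ≤ 1 := by
    rw [← hcol i]
    exact Finset.sum_le_sum_of_subset_of_nonneg hsub (fun x _ _ => hnn x i)
  rw [Finset.sum_insert hinotin, hsum] at hle
  have hrlt : r < 1 := by linarith
  rw [hr, div_lt_one hBjj] at hrlt
  exact hrlt

end helpers

theorem stmt14 {d : ℕ} (E : Fin d → Fin d → Prop)
    (hacyc : ∀ i, ¬ anc E i i)
    (B : Matrix (Fin d) (Fin d) ℝ)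
    (hnn : ∀ j i, 0 ≤ B j i)
    (hsgn : ∀ j i, 0 < B j i ↔ Anc E j i)
    (hcol : ∀ i, ∑ k ∈ Finset.univ.filter (fun k => Anc E k i), B k i = 1)
    (hmw : ∀ i k j, anc E k i → anc E j k → B j i = B j k * B k i / B k k)
    (V0i : Fin d → Finset (Fin d))
    (hV0i : ∀ i, V0i i = Finset.univ.filter
      (fun k => (∀ m, ¬ E m k) ∧ 0 < tdc E B k i))
    (σ : Equiv.Perm (Fin d))
    (h1 : ∀ i j, (V0i j).card < (V0i i).card → σ j < σ i)
    (h2 : ∀ i j, (V0i j).card = (V0i i).card →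
      sSup ((fun k => tdc E B k i) '' ↑(V0i i)) <
        sSup ((fun k => tdc E B k j) '' ↑(V0i j)) → σ j < σ i) :
    ∀ i j, anc E j i → σ j < σ i := by
  intro i j hji
  have hmem : ∀ k m, k ∈ V0i m ↔ (∀ n, ¬ E n k) ∧ Anc E k m := by
    intro k m; rw [hV0i m]; exact mem_V0i hsgn k m
  have hsub : V0i j ⊆ V0i i := by
    intro k hk
    rw [hmem] at hk ⊢
    exact ⟨hk.1, Anc_trans hk.2 (Or.inr hji)⟩
  rcases lt_or_eq_of_le (Finset.card_le_card hsub) with hlt | hcard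
  · exact h1 i j hlt
  · -- equal cards, so equal sets
    have hsets : V0i j = V0i i := Finset.eq_of_subset_of_card_le hsub hcard.ge
    -- key: B k i < B k j for k initial ancestor of j
    have hBlt : ∀ k, (∀ n, ¬ E n k) → Anc E k j → B k i < B k j := by
      intro k hk hkj
      rcases hkj with rfl | hkj
      · exact key_ratio hacyc hnn hsgn hcol hmw hji
      · rw [hmw i j k hji hkj]
        have hBkj : 0 < B k j := (hsgn k j).2 (Or.inr hkj)
        have hBjj : 0 < B j j := (hsgn j j).2 (Or.inl rfl)
        have hrlt : B j i / B j j < 1 := (div_lt_one hBjj).2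
          (key_ratio hacyc hnn hsgn hcol hmw hji)
        calc B k j * B j i / B j j = B k j * (B j i / B j j) := by ring
          _ < B k j * 1 := by exact mul_lt_mul_of_pos_left hrlt hBkj
          _ = B k j := mul_one _
    have hBle1 : ∀ k m, Anc E k m → B k m ≤ 1 := by
      intro k m hkm
      rw [← hcol m]
      exact Finset.single_le_sum (fun x _ => hnn x m) (by simp [hkm])
    -- tdc strict inequality at initial ancestors
    have htdclt : ∀ k, k ∈ V0i i → tdc E B k i < tdc E B k j := by
      intro k hkmem
      have hki := (hmem k i).1 hkmem
      have hkj := (hmem k j).1 (hsets ▸ hkmem)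
      have h1k := Bkk_eq_one hcol hki.1
      rw [tdc_initial hki.1, if_pos hki.2, tdc_initial hki.1, if_pos hkj.2, h1k]
      have hxy := hBlt k hki.1 hkj.2
      have hy1 := hBle1 k j hkj.2
      calc min 1 (B k i) ≤ B k i := min_le_right _ _
        _ < B k j := hxy
        _ = min 1 (B k j) := (min_eq_right hy1).symm
    -- nonempty
    obtain ⟨k₀', hk₀'⟩ := exists_initial_anc hacyc i
    have hne : (V0i i).Nonempty := ⟨k₀', (hmem _ _).2 hk₀'⟩
    set Si := ((fun k => tdc E B k i) '' ↑(V0i i)) with hSi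
    set Sj := ((fun k => tdc E B k j) '' ↑(V0i j)) with hSj
    have hSifin : Si.Finite := (V0i i).finite_toSet.image _
    have hSjfin : Sj.Finite := (V0i j).finite_toSet.image _
    have hSine : Si.Nonempty := ⟨_, Set.mem_image_of_mem _ (by exact_mod_cast hne.choose_spec)⟩
    have hmemSup := hSine.csSup_mem hSifin
    obtain ⟨k₀, hk₀mem, hk₀eq⟩ := hmemSup
    have hk₀mem' : k₀ ∈ V0i i := hk₀mem
    have hlt2 : sSup Si < sSup Sj := by
      rw [← hk₀eq]
      calc tdc E B k₀ i < tdc E B k₀ j := htdclt k₀ hk₀mem'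
        _ ≤ sSup Sj := le_csSup (hSjfin.bddAbove)
            (Set.mem_image_of_mem _ (by exact_mod_cast hsets ▸ hk₀mem'))
    exact h2 i j hcard hlt2
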